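/- The vector field of the closed-loop RFM points strictly inward at the boundary faces of the unit cube in the following sense: for any a ∈ [0,1]^n and any index j, (i) if a_j = 0 and either j = 1 or a_{j−1} > 0, then f_j(a) > 0; and (ii) if a_j = 1 and either j = n or a_{j+1} < 1, then f_j(a) < 0. -/
import Mathlib


open scoped BigOperators

/-- Extend a vector `x : Fin n → ℝ` to a function on `ℕ` (zero outside the range). -/
noncomputable def extVec {n : ℕ} (x : Fin n → ℝ) (j : ℕ) : ℝ :=
  if h : j < n then x ⟨j, h⟩ else 0

/-- The flow from site `j` to site `j+1` (1-based paper indexing of the rates;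
`j = 0` is the initiation flow, `j = n` is the exit flow) in the closed-loop
ribosome flow model with negative feedback `u = k g(y)`. Densities are stored
0-based: Lean index `i` corresponds to the paper's site `i+1`. -/
noncomputable def rfmFlow (n : ℕ) (lam : ℕ → ℝ) (k : ℝ) (g : ℝ → ℝ)
    (x : Fin n → ℝ) (j : ℕ) : ℝ :=
  if j = 0 then lam 0 * k * g (lam n * extVec x (n - 1)) * (1 - extVec x 0)
  else if j = n then lam n * extVec x (n - 1)
  else lam j * extVec x (j - 1) * (1 - extVec x j)

/-- The vector field of the closed-loop RFM with negative feedback. -/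
noncomputable def rfmField (n : ℕ) (lam : ℕ → ℝ) (k : ℝ) (g : ℝ → ℝ)
    (x : Fin n → ℝ) : Fin n → ℝ :=
  fun i => rfmFlow n lam k g x i.val - rfmFlow n lam k g x (i.val + 1)

/-- The vector field of the closed-loop RFM points strictly
inward at the boundary faces of the unit cube. (Lean index `j` corresponds to
the paper's site `j+1`, so "`j = 1`" reads `j.val = 0` and "`j = n`" reads
`j.val = n - 1`.) -/
theorem rfm_negfb_inward_on_boundary
    (n : ℕ) (hn : 2 ≤ n) (lam : ℕ → ℝ) (hlam : ∀ i, i ≤ n → 0 < lam i)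
    (k : ℝ) (hk : 0 < k)
    (g : ℝ → ℝ) (hg : ContDiff ℝ 1 g) (hgpos : ∀ z : ℝ, 0 ≤ z → 0 < g z)
    (hgder : ∀ z : ℝ, 0 < z → deriv g z < 0)
    (a : Fin n → ℝ) (ha : ∀ i, a i ∈ Set.Icc (0:ℝ) 1) (j : Fin n) :
    (a j = 0 → (j.val = 0 ∨ 0 < extVec a (j.val - 1)) →
      0 < rfmField n lam k g a j) ∧
    (a j = 1 → (j.val = n - 1 ∨ extVec a (j.val + 1) < 1) →
      rfmField n lam k g a j < 0) := by

  have hjn : (j : ℕ) < n := j.isLt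
  have hn1 : n - 1 < n := Nat.sub_lt (by omega) one_pos
  have hEj : extVec a j.val = a j := by
    simp only [extVec, hjn, dif_pos]
  have hgp : 0 < g (lam n * extVec a (n - 1)) := by
    apply hgpos
    apply mul_nonneg (le_of_lt (hlam n le_rfl))
    simp only [extVec, hn1, dif_pos]
    exact (ha _).1
  constructor
  · intro h0 hprev
    have hflow1 : rfmFlow n lam k g a (j.val + 1) = 0 := by
      unfold rfmFlow
      rw [if_neg (Nat.succ_ne_zero _)]
      by_cases hjl : j.val + 1 = n
      · rw [if_pos hjl]
        have : n - 1 = j.val := by omega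
        rw [this, hEj, h0, mul_zero]
      · rw [if_neg hjl]
        have : j.val + 1 - 1 = j.val := by omega
        rw [this, hEj, h0, mul_zero, zero_mul]
    have hflow0 : 0 < rfmFlow n lam k g a j.val := by
      unfold rfmFlow
      by_cases hj0 : j.val = 0
      · rw [if_pos hj0]
        have : extVec a 0 = a j := by rw [← hj0, hEj]
        rw [this, h0, sub_zero, mul_one]
        exact mul_pos (mul_pos (hlam 0 (by omega)) hk) hgp
      · rw [if_neg hj0, if_neg (by omega)]
        rcases hprev with h | hprev
        · exact absurd h hj0
        · rw [hEj, h0, sub_zero, mul_one]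
          exact mul_pos (hlam j.val (by omega)) hprev
    unfold rfmField
    rw [hflow1]
    linarith
  · intro h1 hnext
    have hflow0 : rfmFlow n lam k g a j.val = 0 := by
      unfold rfmFlow
      by_cases hj0 : j.val = 0
      · rw [if_pos hj0]
        have : extVec a 0 = a j := by rw [← hj0, hEj]
        rw [this, h1, sub_self, mul_zero]
      · rw [if_neg hj0, if_neg (by omega), hEj, h1, sub_self, mul_zero]
    have hflow1 : 0 < rfmFlow n lam k g a (j.val + 1) := by
      unfold rfmFlow
      rw [if_neg (Nat.succ_ne_zero _)]
      by_cases hjl : j.val + 1 = n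
      · rw [if_pos hjl]
        have : n - 1 = j.val := by omega
        rw [this, hEj, h1, mul_one]
        exact hlam n le_rfl
      · rw [if_neg hjl]
        have he : j.val + 1 - 1 = j.val := by omega
        rw [he, hEj, h1, mul_one]
        rcases hnext with h | hnext
        · omega
        · exact mul_pos (hlam (j.val+1) (by omega)) (by linarith)
    unfold rfmField
    rw [hflow0]
    linarith
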